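/- arXiv:2505.04266 — 2 statements merged into one kernel-verified Lean document; each statement's English description precedes it below -/
import Mathlib

section
/- Consider a dynamic Bayesian network over genes {1,…,N} and times {1,…,K} with static acyclic directed graph G_stat, where the joint law factorizes as P(X = x) = Π_{k=1}^{K-1} Π_{i=1}^N P(X_{i,k+1} = x_{i,k+1} | (X_{ℓ,k})_{ℓ∈A(i)} = (x_{ℓ,k})_{ℓ∈A(i)}) · Π_i P(X_{i,1} = x_{i,1}), with A(i) the parents of i. Let C be a connected component of G_stat minus vertex 1 that is downstream of gene 1 (no edge from any j ∈ C to 1). Then under the conditional knock-out model (the law of (X_{ik})_{2≤i≤N} conditioned on (X_{1k})_{1≤k≤K} = 0), the family (X_{ik})_{i∈C, 1≤k≤K} is independent of (X_{ik})_{i∉C∪{1}, 1≤k≤K}. -/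
open MeasureTheory ProbabilityTheory
open scoped ENNReal ProbabilityTheory

/-- in a dynamic Bayesian network over genes `Fin N` and times `Fin K` with binary
expressions, whose law factorizes via time-homogeneous transition probabilities `p` depending
only on the parents `A i` at the previous time, if `C` is a connected component of the static
graph minus gene `g1` which is downstream of `g1` (no edge from `C` to `g1`), then under the
conditional knock-out model (conditioning on gene `g1` being `0` at all times), the expressions
of genes in `C` are independent of the expressions of genes outside `C ∪ {g1}`. -/
theorem stmt_8 {N K : ℕ} [NeZero K] {Ω : Type*} [MeasurableSpace Ω]
    (Pr : Measure Ω) [IsProbabilityMeasure Pr]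
    (X : Ω → Fin N → Fin K → Fin 2) (hX : Measurable X)
    (A : Fin N → Finset (Fin N))
    (p0 : Fin N → Fin 2 → ℝ≥0∞) (p : Fin N → Fin 2 → (Fin N → Fin 2) → ℝ≥0∞)
    -- the transition probability of gene `i` depends only on its parents `A i`:
    (hlocal : ∀ i v y y', (∀ ℓ ∈ A i, y ℓ = y' ℓ) → p i v y = p i v y')
    -- factorization of the law of the dynamic Bayesian network:
    (hfact : ∀ x : Fin N → Fin K → Fin 2,
      Pr {ω | X ω = x} =
        ∏ i : Fin N, ∏ k : Fin K,
          (if k = 0 then p0 i (x i 0) else p i (x i k) (fun ℓ => x ℓ (k - 1))))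
    (g1 : Fin N) (C : Finset (Fin N)) (hg1C : g1 ∉ C)
    -- `C` is closed under parents in the graph minus `g1`:
    (hparents : ∀ i ∈ C, ∀ j ∈ A i, j ∈ C ∨ j = g1)
    -- `C` is closed under children in the graph minus `g1`:
    (hchildren : ∀ i : Fin N, i ∉ C → i ≠ g1 → ∀ j ∈ A i, j ∉ C)
    -- `C` is downstream of gene `g1`: no edge from `C` to `g1`:
    (hdown : ∀ j ∈ A g1, j ∉ C)
    -- the knock-out event has positive probability:
    (hpos : Pr {ω | ∀ k, X ω g1 k = 0} ≠ 0) :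
    IndepFun (fun ω (i : C) (k : Fin K) => X ω i k)
      (fun ω (i : {i : Fin N // i ∉ C ∧ i ≠ g1}) (k : Fin K) => X ω i k)
      (Pr[|{ω | ∀ k, X ω g1 k = 0}]) := by
  classical
  set E : Set Ω := {ω | ∀ k, X ω g1 k = 0} with hE_def
  set f : Ω → (C → Fin K → Fin 2) := fun ω (i : C) (k : Fin K) => X ω i k with hf_def
  set g : Ω → ({i : Fin N // i ∉ C ∧ i ≠ g1} → Fin K → Fin 2) :=
    fun ω (i : {i : Fin N // i ∉ C ∧ i ≠ g1}) (k : Fin K) => X ω i k with hg_def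
  -- gluing function
  set glue : (C → Fin K → Fin 2) → ({i : Fin N // i ∉ C ∧ i ≠ g1} → Fin K → Fin 2) →
      (Fin N → Fin K → Fin 2) :=
    fun a b i => if h : i ∈ C then a ⟨i, h⟩ else if h' : i = g1 then (fun _ => 0)
      else b ⟨i, h, h'⟩ with hglue_def
  have glue_right : ∀ a b b' (i : Fin N), (i ∈ C ∨ i = g1) → glue a b i = glue a b' i := by
    rintro a b b' i (h | h)
    · simp [hglue_def, h]
    · subst h; simp [hglue_def, hg1C]
  have glue_left : ∀ a a' b (i : Fin N), i ∉ C → glue a b i = glue a' b i := by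
    intro a a' b i h
    simp [hglue_def, h]
  have glue_g1 : ∀ a b k, glue a b g1 k = 0 := by
    intro a b k; simp [hglue_def, hg1C]
  have glue_inC : ∀ a b (i : Fin N) (h : i ∈ C), glue a b i = a ⟨i, h⟩ := by
    intro a b i h; simp [hglue_def, h]
  have glue_out : ∀ a b (i : Fin N) (h : i ∉ C) (h' : i ≠ g1), glue a b i = b ⟨i, h, h'⟩ := by
    intro a b i h h'; simp [hglue_def, h, h']
  -- the factorization factors
  set fac : Fin N → Fin K → (Fin N → Fin K → Fin 2) → ℝ≥0∞ :=
    fun i k x => if k = 0 then p0 i (x i 0) else p i (x i k) (fun ℓ => x ℓ (k - 1))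
    with hfac_def
  set b0 : {i : Fin N // i ∉ C ∧ i ≠ g1} → Fin K → Fin 2 := fun _ _ => 0 with hb0
  set a0 : C → Fin K → Fin 2 := fun _ _ => 0 with ha0
  set F : (C → Fin K → Fin 2) → ℝ≥0∞ := fun a => ∏ i ∈ C, ∏ k, fac i k (glue a b0) with hF
  set G : ({i : Fin N // i ∉ C ∧ i ≠ g1} → Fin K → Fin 2) → ℝ≥0∞ :=
    fun b => ∏ i ∈ Cᶜ, ∏ k, fac i k (glue a0 b) with hG
  -- key product identity
  have key : ∀ a b, Pr {ω | X ω = glue a b} = F a * G b := by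
    intro a b
    rw [hfact, ← Finset.prod_mul_prod_compl C]
    congr 1
    · refine Finset.prod_congr rfl fun i hi => Finset.prod_congr rfl fun k _ => ?_
      simp only [hfac_def]
      by_cases hk : k = 0
      · simp only [hk, if_true, eq_self_iff_true, glue_inC a b i hi, glue_inC a b0 i hi]
      · simp only [if_neg hk, glue_inC a b i hi, glue_inC a b0 i hi]
        exact hlocal i _ _ _ fun ℓ hℓ => by
          rw [glue_right a b b0 ℓ (hparents i hi ℓ hℓ)]
    · refine Finset.prod_congr rfl fun i hi => Finset.prod_congr rfl fun k _ => ?_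
      rw [Finset.mem_compl] at hi
      have hpar : ∀ ℓ ∈ A i, glue a b ℓ = glue a0 b ℓ := by
        intro ℓ hℓ
        by_cases hig : i = g1
        · exact glue_left a a0 b ℓ (hdown ℓ (hig ▸ hℓ))
        · exact glue_left a a0 b ℓ (hchildren i hi hig ℓ hℓ)
      simp only [hfac_def]
      by_cases hk : k = 0
      · simp only [hk, if_true, eq_self_iff_true, glue_left a a0 b i hi]
      · simp only [if_neg hk, glue_left a a0 b i hi]
        exact hlocal i _ _ _ fun ℓ hℓ => by rw [hpar ℓ hℓ]
  -- pointwise characterization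
  have hiff : ∀ ω a b, X ω = glue a b ↔ (ω ∈ E ∧ f ω = a ∧ g ω = b) := by
    intro ω a b
    constructor
    · intro h
      refine ⟨fun k => by rw [h]; exact glue_g1 a b k, ?_, ?_⟩
      · funext i k
        simp only [hf_def]
        rw [h, glue_inC a b i i.2]
      · funext i k
        simp only [hg_def]
        rw [h, glue_out a b i i.2.1 i.2.2]
    · rintro ⟨h1, h2, h3⟩
      funext i k
      by_cases hi : i ∈ C
      · rw [glue_inC a b i hi, ← h2]
      · by_cases hig : i = g1
        · subst hig
          rw [h1 k]
          exact (glue_g1 a b k).symm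
        · rw [glue_out a b i hi hig, ← h3]
  have msets : ∀ x : Fin N → Fin K → Fin 2, MeasurableSet {ω | X ω = x} := by
    intro x
    have : {ω | X ω = x} = X ⁻¹' {x} := rfl
    rw [this]
    exact hX (measurableSet_singleton x)
  -- disjointness
  have hglue_inj : ∀ a b a' b', glue a b = glue a' b' → a = a' ∧ b = b' := by
    intro a b a' b' h
    constructor
    · funext i k
      have := congrFun (congrFun h i) k
      rwa [glue_inC a b i i.2, glue_inC a' b' i i.2] at this
    · funext i k
      have := congrFun (congrFun h i) k
      rwa [glue_out a b i i.2.1 i.2.2, glue_out a' b' i i.2.1 i.2.2] at this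
  have hdisj0 : ∀ x y : Fin N → Fin K → Fin 2, x ≠ y →
      Disjoint {ω | X ω = x} {ω | X ω = y} := by
    intro x y hxy
    refine Set.disjoint_left.2 fun ω h1 h2 => hxy ?_
    rw [← h1, ← h2]
  have pdis1 : ∀ a, Pairwise (Function.onFun Disjoint fun b => {ω | X ω = glue a b}) := by
    intro a b b' hne
    exact hdisj0 _ _ fun h => hne (hglue_inj _ _ _ _ h).2
  have pdis2 : ∀ b, Pairwise (Function.onFun Disjoint fun a => {ω | X ω = glue a b}) := by
    intro b a a' hne
    exact hdisj0 _ _ fun h => hne (hglue_inj _ _ _ _ h).1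
  have pdis3 : Pairwise (Function.onFun Disjoint
      fun c : ((C → Fin K → Fin 2) × ({i : Fin N // i ∉ C ∧ i ≠ g1} → Fin K → Fin 2)) =>
        {ω | X ω = glue c.1 c.2}) := by
    intro c c' hne
    refine hdisj0 _ _ fun h => hne ?_
    obtain ⟨h1, h2⟩ := hglue_inj _ _ _ _ h
    exact Prod.ext h1 h2
  -- sums
  have hEA : ∀ a, E ∩ f ⁻¹' {a} = ⋃ b, {ω | X ω = glue a b} := by
    intro a
    ext ω
    simp only [Set.mem_inter_iff, Set.mem_preimage, Set.mem_singleton_iff, Set.mem_iUnion,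
      Set.mem_setOf_eq]
    constructor
    · rintro ⟨h1, h2⟩
      exact ⟨fun i k => X ω i k, (hiff ω a _).2 ⟨h1, h2, rfl⟩⟩
    · rintro ⟨b, hb⟩
      have := (hiff ω a b).1 hb
      exact ⟨this.1, this.2.1⟩
  have hEB : ∀ b, E ∩ g ⁻¹' {b} = ⋃ a, {ω | X ω = glue a b} := by
    intro b
    ext ω
    simp only [Set.mem_inter_iff, Set.mem_preimage, Set.mem_singleton_iff, Set.mem_iUnion,
      Set.mem_setOf_eq]
    constructor
    · rintro ⟨h1, h2⟩
      exact ⟨fun i k => X ω i k, (hiff ω _ b).2 ⟨h1, rfl, h2⟩⟩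
    · rintro ⟨a, ha⟩
      have := (hiff ω a b).1 ha
      exact ⟨this.1, this.2.2⟩
  have hEE : E = ⋃ c : ((C → Fin K → Fin 2) × ({i : Fin N // i ∉ C ∧ i ≠ g1} → Fin K → Fin 2)),
      {ω | X ω = glue c.1 c.2} := by
    ext ω
    simp only [Set.mem_iUnion, Set.mem_setOf_eq]
    constructor
    · intro h
      exact ⟨⟨fun i k => X ω i k, fun i k => X ω i k⟩, (hiff ω _ _).2 ⟨h, rfl, rfl⟩⟩
    · rintro ⟨c, hc⟩
      exact ((hiff ω _ _).1 hc).1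
  have hEAB : ∀ a b, E ∩ (f ⁻¹' {a} ∩ g ⁻¹' {b}) = {ω | X ω = glue a b} := by
    intro a b
    ext ω
    simp only [Set.mem_inter_iff, Set.mem_preimage, Set.mem_singleton_iff, Set.mem_setOf_eq]
    rw [hiff ω a b]
  set SF : ℝ≥0∞ := ∑ a, F a with hSF
  set SG : ℝ≥0∞ := ∑ b, G b with hSG
  have hPrE : Pr E = SF * SG := by
    rw [hEE, measure_iUnion pdis3 (fun c => msets _), tsum_fintype]
    rw [hSF, hSG, Finset.sum_mul_sum, Fintype.sum_prod_type]
    exact Finset.sum_congr rfl fun a _ => Finset.sum_congr rfl fun b _ => key a b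
  have hPrA : ∀ a, Pr (E ∩ f ⁻¹' {a}) = F a * SG := by
    intro a
    rw [hEA a, measure_iUnion (pdis1 a) (fun c => msets _), tsum_fintype]
    rw [hSG, Finset.mul_sum]
    exact Finset.sum_congr rfl fun b _ => key a b
  have hPrB : ∀ b, Pr (E ∩ g ⁻¹' {b}) = SF * G b := by
    intro b
    rw [hEB b, measure_iUnion (pdis2 b) (fun c => msets _), tsum_fintype]
    rw [hSF, Finset.sum_mul]
    exact Finset.sum_congr rfl fun a _ => key a b
  -- measurability of f, g, E
  have hfm : Measurable f := by
    apply measurable_pi_lambda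
    intro i
    apply measurable_pi_lambda
    intro k
    exact ((measurable_pi_apply k).comp ((measurable_pi_apply (i : Fin N)).comp hX))
  have hgm : Measurable g := by
    apply measurable_pi_lambda
    intro i
    apply measurable_pi_lambda
    intro k
    exact ((measurable_pi_apply k).comp ((measurable_pi_apply (i : Fin N)).comp hX))
  have hEm : MeasurableSet E := by
    rw [hEE]
    exact MeasurableSet.iUnion fun c => msets _
  have hEne : Pr E ≠ 0 := hpos
  have hEfin : Pr E ≠ ⊤ := measure_ne_top Pr E
  have hcancel : (Pr E)⁻¹ * Pr E = 1 := ENNReal.inv_mul_cancel hEne hEfin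
  haveI : IsProbabilityMeasure (Pr[|E]) := cond_isProbabilityMeasure hEne
  rw [indepFun_iff_map_prod_eq_prod_map_map (hfm.aemeasurable) (hgm.aemeasurable)]
  apply Measure.ext_of_singleton
  rintro ⟨a, b⟩
  rw [Measure.map_apply (hfm.prodMk hgm) (measurableSet_singleton _),
    ← Set.singleton_prod_singleton, Measure.prod_prod,
    Measure.map_apply hfm (measurableSet_singleton a),
    Measure.map_apply hgm (measurableSet_singleton b)]
  have hpre : (fun ω => (f ω, g ω)) ⁻¹' ({a} ×ˢ {b}) = f ⁻¹' {a} ∩ g ⁻¹' {b} := by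
    ext ω
    simp [Prod.ext_iff]
  rw [hpre, cond_apply hEm, cond_apply hEm, cond_apply hEm, hEAB a b, key a b,
    hPrA a, hPrB b]
  calc (Pr E)⁻¹ * (F a * G b)
      = (Pr E)⁻¹ * (F a * G b) * 1 := by rw [mul_one]
    _ = (Pr E)⁻¹ * (F a * G b) * ((Pr E)⁻¹ * Pr E) := by rw [hcancel]
    _ = (Pr E)⁻¹ * (F a * G b) * ((Pr E)⁻¹ * (SF * SG)) := by rw [hPrE]
    _ = (Pr E)⁻¹ * (F a * SG) * ((Pr E)⁻¹ * (SF * G b)) := by ring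
end

section
/- There exists a dynamic Bayesian network for which the conditional knock-out model does not satisfy the independence property of upstream components: with N = 3 genes and K = 2 times, let X_{11}, X_{21}, X_{22}, X_{31}, X_{32} be i.i.d. Bernoulli(1/2) and X_{12} = |X_{21} - X_{31}|. Then conditionally on X_{12} = 0 (and X_{11} = 0), the variables X_{21} and X_{31} are not independent; in fact X_{21} = X_{31} almost surely on this event. -/
open MeasureTheory ProbabilityTheory
open scoped ENNReal ProbabilityTheory

/-- example of a dynamic Bayesian network where the conditional knock-out model
does not satisfy the independence property of upstream components. With `Y 0 = X₁₁`,
`Y 1 = X₂₁`, `Y 2 = X₃₁`, `Y 3 = X₂₂`, `Y 4 = X₃₂` i.i.d. Bernoulli(1/2) and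
`X₁₂ = |X₂₁ - X₃₁|`, conditionally on `X₁₁ = 0` and `X₁₂ = 0`, the variables `X₂₁` and `X₃₁`
are not independent; in fact they are almost surely equal on this event. -/
theorem stmt_11 {Ω : Type*} [MeasurableSpace Ω]
    (Pr : Measure Ω) [IsProbabilityMeasure Pr]
    (Y : Fin 5 → Ω → ℝ) (hY : ∀ i, Measurable (Y i))
    (hind : iIndepFun Y Pr)
    (hlaw0 : ∀ i, Pr {ω | Y i ω = 0} = 1 / 2)
    (hlaw1 : ∀ i, Pr {ω | Y i ω = 1} = 1 / 2) :
    ¬ IndepFun (Y 1) (Y 2) (Pr[|{ω | Y 0 ω = 0 ∧ |Y 1 ω - Y 2 ω| = 0}]) ∧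
      (Pr[|{ω | Y 0 ω = 0 ∧ |Y 1 ω - Y 2 ω| = 0}]) {ω | Y 1 ω = Y 2 ω} = 1 := by
  set A : Set Ω := {ω | Y 0 ω = 0 ∧ |Y 1 ω - Y 2 ω| = 0} with hA_def
  have hAeq : A = {ω | Y 0 ω = 0 ∧ Y 1 ω = Y 2 ω} := by
    ext ω; simp [hA_def, abs_eq_zero, sub_eq_zero]
  have hA : MeasurableSet A := by
    rw [hAeq]
    exact ((hY 0) (measurableSet_singleton 0)).inter
      (measurableSet_eq_fun (hY 1) (hY 2))
  -- triple intersections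
  have key : ∀ (a b c : ℝ),
      Pr (Y 0 ⁻¹' {a} ∩ (Y 1 ⁻¹' {b} ∩ Y 2 ⁻¹' {c})) =
        Pr (Y 0 ⁻¹' {a}) * (Pr (Y 1 ⁻¹' {b}) * Pr (Y 2 ⁻¹' {c})) := by
    intro a b c
    have h := hind.measure_inter_preimage_eq_mul ({0, 1, 2} : Finset (Fin 5))
      (sets := ![{a}, {b}, {c}, Set.univ, Set.univ])
      (fun i _ => by fin_cases i <;>
        simp [measurableSet_singleton, MeasurableSet.univ])
    simpa [Finset.set_biInter_insert, Finset.prod_insert, Set.inter_assoc,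
      mul_assoc] using h
  have hp0 : ∀ i, Pr (Y i ⁻¹' {(0:ℝ)}) = 1 / 2 := fun i => by
    simpa [Set.preimage, Set.mem_singleton_iff] using hlaw0 i
  have hp1 : ∀ i, Pr (Y i ⁻¹' {(1:ℝ)}) = 1 / 2 := fun i => by
    simpa [Set.preimage, Set.mem_singleton_iff] using hlaw1 i
  set E000 : Set Ω := Y 0 ⁻¹' {0} ∩ (Y 1 ⁻¹' {0} ∩ Y 2 ⁻¹' {0}) with hE000_def
  set E011 : Set Ω := Y 0 ⁻¹' {0} ∩ (Y 1 ⁻¹' {1} ∩ Y 2 ⁻¹' {1}) with hE011_def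
  have hPE000 : Pr E000 = 1 / 8 := by
    rw [hE000_def, key 0 0 0, hp0 0, hp0 1, hp0 2]
    rw [show ((1:ℝ≥0∞)/2) * (1/2 * (1/2)) = 1/8 by
      rw [← ENNReal.toReal_eq_toReal_iff' (ENNReal.mul_ne_top (by simp) (ENNReal.mul_ne_top (by simp) (by simp))) (by simp : (1:ℝ≥0∞)/8 ≠ ⊤)]; simp; norm_num]
  have hPE011 : Pr E011 = 1 / 8 := by
    rw [hE011_def, key 0 1 1, hp0 0, hp1 1, hp1 2]
    rw [show ((1:ℝ≥0∞)/2) * (1/2 * (1/2)) = 1/8 by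
      rw [← ENNReal.toReal_eq_toReal_iff' (ENNReal.mul_ne_top (by simp) (ENNReal.mul_ne_top (by simp) (by simp))) (by simp : (1:ℝ≥0∞)/8 ≠ ⊤)]; simp; norm_num]
  have hm000 : MeasurableSet E000 :=
    ((hY 0) (measurableSet_singleton _)).inter
      (((hY 1) (measurableSet_singleton _)).inter ((hY 2) (measurableSet_singleton _)))
  have hm011 : MeasurableSet E011 :=
    ((hY 0) (measurableSet_singleton _)).inter
      (((hY 1) (measurableSet_singleton _)).inter ((hY 2) (measurableSet_singleton _)))
  have hdisj : Disjoint E000 E011 := by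
    rw [Set.disjoint_left]
    rintro ω ⟨-, h1, -⟩ ⟨-, h1', -⟩
    simp only [Set.mem_preimage, Set.mem_singleton_iff] at h1 h1'
    rw [h1] at h1'; norm_num at h1'
  have hsub : E000 ∪ E011 ⊆ A := by
    rw [hAeq]
    rintro ω (⟨h0, h1, h2⟩ | ⟨h0, h1, h2⟩) <;>
      simp only [Set.mem_preimage, Set.mem_singleton_iff] at h0 h1 h2 <;>
      exact ⟨h0, by rw [h1, h2]⟩
  have hA_lb : 1 / 4 ≤ Pr A := by
    calc (1:ℝ≥0∞) / 4 = 1/8 + 1/8 := by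
          rw [ENNReal.div_add_div_same, ENNReal.div_eq_div_iff] <;> norm_num
      _ = Pr (E000 ∪ E011) := by rw [measure_union hdisj hm011, hPE000, hPE011]
      _ ≤ Pr A := measure_mono hsub
  have hA_ne0 : Pr A ≠ 0 := by
    intro h; rw [h] at hA_lb
    exact absurd (le_antisymm hA_lb (zero_le)) (by norm_num)
  have hA_netop : Pr A ≠ ∞ := measure_ne_top _ _
  -- the conditional probability of each key event
  have hcap : ∀ B : Set Ω, A ∩ B = E000 →
      (Pr[|A]) B = (Pr A)⁻¹ * (1 / 8) := by
    intro B hB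
    rw [cond_apply hA, hB, hPE000]
  have hA1 : A ∩ Y 1 ⁻¹' {0} = E000 := by
    rw [hAeq]; ext ω
    simp only [Set.mem_inter_iff, Set.mem_setOf_eq, Set.mem_preimage,
      Set.mem_singleton_iff, hE000_def]
    constructor
    · rintro ⟨⟨h0, h12⟩, h1⟩; exact ⟨h0, h1, by rw [← h12, h1]⟩
    · rintro ⟨h0, h1, h2⟩; exact ⟨⟨h0, by rw [h1, h2]⟩, h1⟩
  have hA2 : A ∩ Y 2 ⁻¹' {0} = E000 := by
    rw [hAeq]; ext ω
    simp only [Set.mem_inter_iff, Set.mem_setOf_eq, Set.mem_preimage,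
      Set.mem_singleton_iff, hE000_def]
    constructor
    · rintro ⟨⟨h0, h12⟩, h2⟩; exact ⟨h0, by rw [h12, h2], h2⟩
    · rintro ⟨h0, h1, h2⟩; exact ⟨⟨h0, by rw [h1, h2]⟩, h2⟩
  have hA12 : A ∩ (Y 1 ⁻¹' {0} ∩ Y 2 ⁻¹' {0}) = E000 := by
    rw [hAeq]; ext ω
    simp only [Set.mem_inter_iff, Set.mem_setOf_eq, Set.mem_preimage,
      Set.mem_singleton_iff, hE000_def]
    constructor
    · rintro ⟨⟨h0, h12⟩, h1, h2⟩; exact ⟨h0, h1, h2⟩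
    · rintro ⟨h0, h1, h2⟩; exact ⟨⟨h0, by rw [h1, h2]⟩, h1, h2⟩
  set x : ℝ≥0∞ := (Pr A)⁻¹ * (1 / 8) with hx_def
  have hx_ne0 : x ≠ 0 := by
    apply mul_ne_zero
    · exact ENNReal.inv_ne_zero.2 hA_netop
    · norm_num
  have hx_netop : x ≠ ∞ :=
    ENNReal.mul_ne_top (ENNReal.inv_ne_top.2 hA_ne0) (by norm_num)
  have hx_le : x ≤ 1 / 2 := by
    have hinv : (Pr A)⁻¹ ≤ (1/4 : ℝ≥0∞)⁻¹ := ENNReal.inv_le_inv' hA_lb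
    calc x ≤ (1/4 : ℝ≥0∞)⁻¹ * (1/8) := mul_le_mul_left hinv _
      _ = 1 / 2 := by
          rw [← ENNReal.toReal_eq_toReal_iff' (ENNReal.mul_ne_top (by simp) (by simp))
            (by simp : (1:ℝ≥0∞)/2 ≠ ⊤)]
          simp; norm_num
  constructor
  · intro hIndep
    have h := hIndep.measure_inter_preimage_eq_mul (s := {0}) (t := {0})
      (measurableSet_singleton _) (measurableSet_singleton _)
    rw [hcap _ hA12, hcap _ hA1, hcap _ hA2] at h
    have h1 : (1:ℝ≥0∞) = x :=
      (ENNReal.mul_right_inj hx_ne0 hx_netop).1 (by rw [mul_one, ← h])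
    rw [← h1] at hx_le
    exact absurd hx_le (by simp)
  · rw [cond_apply hA]
    have : A ∩ {ω | Y 1 ω = Y 2 ω} = A := by
      rw [Set.inter_eq_left, hAeq]; intro ω hω; exact hω.2
    rw [this, ENNReal.inv_mul_cancel hA_ne0 hA_netop]
end
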